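/- If x is a revised ascent sequence of length n, then max(x) = |Ascbot(x)| = |Asctop(x)|. -/

import Mathlib

/-- An endofunction of size `n`: values in `{1,…,n}` (indices are `Fin n`, 0-based). -/
def IsEndo (n : ℕ) (x : Fin n → ℕ) : Prop := ∀ i, 1 ≤ x i ∧ x i ≤ n

/-- The maximum value of `x`. -/
def maxVal (n : ℕ) (x : Fin n → ℕ) : ℕ := Finset.univ.sup x

/-- A Cayley permutation: an endofunction whose image is `{1,…,max x}`. -/
def IsCayley (n : ℕ) (x : Fin n → ℕ) : Prop :=
  IsEndo n x ∧ ∀ v, 1 ≤ v → v ≤ maxVal n x → ∃ i, x i = v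

/-- Ascent bottoms (0-based; index 0 always included). -/
def Ascbot (n : ℕ) (x : Fin n → ℕ) : Set (Fin n) :=
  {i | i.1 = 0 ∨ ∃ h : i.1 + 1 < n, x i < x ⟨i.1 + 1, h⟩}

/-- Indices of leftmost occurrences of values. -/
def Nub (n : ℕ) (x : Fin n → ℕ) : Set (Fin n) :=
  {i | ∀ j, j < i → x j ≠ x i}

/-- A revised ascent sequence. -/
def IsRAS (n : ℕ) (x : Fin n → ℕ) : Prop :=
  IsCayley n x ∧ Ascbot n x = Nub n x

/-- Ascent tops (0-based; index 0 always included). -/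
def Asctop (n : ℕ) (x : Fin n → ℕ) : Set (Fin n) :=
  {i | i.1 = 0 ∨ ∃ _ : 0 < i.1,
    x ⟨i.1 - 1, lt_of_le_of_lt (Nat.sub_le _ _) i.2⟩ < x i}

lemma nub_ncard (n : ℕ) (x : Fin n → ℕ) (hx : IsCayley n x) :
    (Nub n x).ncard = maxVal n x := by
  have hinj : Set.InjOn x (Nub n x) := by
    intro i hi j hj hij
    rcases lt_trichotomy i j with h | h | h
    · exact absurd hij (hj i h)
    · exact h
    · exact absurd hij.symm (hi j h)
  have himg : x '' (Nub n x) = Set.Icc 1 (maxVal n x) := by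
    ext v
    constructor
    · rintro ⟨i, hi, rfl⟩
      exact ⟨(hx.1 i).1, Finset.le_sup (Finset.mem_univ i)⟩
    · rintro ⟨h1, h2⟩
      obtain ⟨i, hi⟩ := hx.2 v h1 h2
      have hne : (Finset.univ.filter (fun j => x j = v)).Nonempty := ⟨i, by simp [hi]⟩
      set i0 := (Finset.univ.filter (fun j => x j = v)).min' hne with hi0
      have hmem : x i0 = v := by
        have := Finset.min'_mem _ hne
        simpa [hi0] using this
      refine ⟨i0, ?_, hmem⟩
      intro j hj hxj
      have : i0 ≤ j := Finset.min'_le _ j (by simp [hxj, hmem])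
      exact absurd hj (not_lt.mpr this)
  have h := Set.ncard_image_of_injOn hinj
  rw [himg] at h
  rw [← h, ← Finset.coe_Icc, Set.ncard_coe_finset, Nat.card_Icc]
  omega

lemma no_initial_ascent (n : ℕ) (x : Fin n → ℕ) (hx : IsRAS n x) :
    ¬ ∃ h : 1 < n, x ⟨0, Nat.lt_of_lt_of_le Nat.zero_lt_one h.le⟩ < x ⟨1, h⟩ := by
  rintro ⟨hn, hasc⟩
  have claim : ∀ k, ∀ hk : k < n, ∀ j, ∀ hj : j < k, x ⟨j, hj.trans hk⟩ < x ⟨k, hk⟩ := by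
    intro k
    induction k using Nat.strong_induction_on with
    | _ k IH =>
      match k with
      | 0 => intro _ j hj; omega
      | m + 1 =>
        intro hk j hj
        have hm : m < n := Nat.lt_of_succ_lt hk
        have hnub : (⟨m, hm⟩ : Fin n) ∈ Nub n x := by
          intro j' hj' heq
          have hj'' : j'.1 < m := hj'
          have := IH m (Nat.lt_succ_self m) hm j'.1 hj''
          have hje : (⟨j'.1, hj''.trans hm⟩ : Fin n) = j' := Fin.ext rfl
          rw [hje] at this
          exact absurd heq (ne_of_lt this)
        rw [← hx.2] at hnub
        have hstep : x ⟨m, hm⟩ < x ⟨m + 1, hk⟩ := by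
          rcases hnub with h0 | ⟨h', hlt⟩
          · subst h0
            exact hasc
          · exact hlt
        rcases Nat.lt_or_ge j m with hjm | hjm
        · exact lt_trans (IH m (Nat.lt_succ_self m) hm j hjm) hstep
        · have : j = m := by omega
          subst this
          exact hstep
  have hn1 : n - 1 < n := by omega
  have hnub : (⟨n - 1, hn1⟩ : Fin n) ∈ Nub n x := by
    intro j' hj' heq
    have hj'' : j'.1 < n - 1 := hj'
    have := claim (n - 1) hn1 j'.1 hj''
    have hje : (⟨j'.1, hj''.trans hn1⟩ : Fin n) = j' := Fin.ext rfl
    rw [hje] at this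
    exact absurd heq (ne_of_lt this)
  rw [← hx.2] at hnub
  rcases hnub with h0 | ⟨h', _⟩
  · have : n - 1 = 0 := h0
    omega
  · have : n - 1 + 1 < n := h'
    omega

theorem stmt3 (n : ℕ) (x : Fin n → ℕ) (hx : IsRAS n x) :
    maxVal n x = (Ascbot n x).ncard ∧ maxVal n x = (Asctop n x).ncard := by
  have h1 : maxVal n x = (Ascbot n x).ncard := by
    rw [hx.2, nub_ncard n x hx.1]
  refine ⟨h1, ?_⟩
  rw [h1]
  -- show ncard Ascbot = ncard Asctop
  rcases Nat.eq_zero_or_pos n with h0 | hpos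
  · subst h0
    rw [Set.eq_empty_of_isEmpty (Ascbot 0 x), Set.eq_empty_of_isEmpty (Asctop 0 x)]
  · set z : Fin n := ⟨0, hpos⟩ with hz
    set A : Set (Fin n) := {i | ∃ h : i.1 + 1 < n, x i < x ⟨i.1 + 1, h⟩} with hA
    set T : Set (Fin n) := {i | ∃ _ : 0 < i.1,
      x ⟨i.1 - 1, lt_of_le_of_lt (Nat.sub_le _ _) i.2⟩ < x i} with hT
    have hAb : Ascbot n x = insert z A := by
      ext i
      simp only [Ascbot, Set.mem_setOf_eq, Set.mem_insert_iff, hA, hz, Fin.ext_iff]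
    have hAt : Asctop n x = insert z T := by
      ext i
      simp only [Asctop, Set.mem_setOf_eq, Set.mem_insert_iff, hT, hz, Fin.ext_iff]
    have hzA : z ∉ A := by
      intro ⟨h, hlt⟩
      exact no_initial_ascent n x hx ⟨h, hlt⟩
    have hzT : z ∉ T := by
      rintro ⟨h, -⟩
      exact absurd h (lt_irrefl 0)
    rw [hAb, hAt, Set.ncard_insert_of_notMem hzA (Set.toFinite A),
      Set.ncard_insert_of_notMem hzT (Set.toFinite T)]
    congr 1
    -- bijection between A and T via successor
    set f : Fin n → Fin n := fun i => if h : i.1 + 1 < n then ⟨i.1 + 1, h⟩ else i with hf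
    have himg : f '' A = T := by
      ext j
      constructor
      · rintro ⟨i, ⟨h, hlt⟩, rfl⟩
        refine ⟨?_, ?_⟩ <;> simp only [hf, dif_pos h]
        · exact Nat.succ_pos _
        · convert hlt using 2
          exact Fin.ext (by simp)
      · rintro ⟨hj, hlt⟩
        have hjn : j.1 - 1 + 1 < n := by omega
        refine ⟨⟨j.1 - 1, by omega⟩, ⟨hjn, ?_⟩, ?_⟩
        · convert hlt using 2
          exact Fin.ext (by simp; omega)
        · simp only [hf, dif_pos hjn]
          exact Fin.ext (by simp; omega)
    have hinj : Set.InjOn f A := by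
      rintro i ⟨hi, -⟩ i' ⟨hi', -⟩ heq
      simp only [hf, dif_pos hi, dif_pos hi', Fin.ext_iff] at heq ⊢
      omega
    rw [← himg, Set.ncard_image_of_injOn hinj]
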